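/- For all real t ≥ 1 and real q ≥ 2, log₂((((t+1)^q)/(t^q+1))^(1/(q-1))) ≥ (t^(q-1) + t)/(t^q + 1). -/

import Mathlib

open Real Set

private lemma aux_log_lb (x : ℝ) (hx : 0 ≤ x) :
    x - x^2/2 + x^3/3 - x^4/4 ≤ Real.log (1+x) := by
  have hd : ∀ y : ℝ, 0 ≤ y →
      HasDerivAt (fun z : ℝ => Real.log (1+z) - (z - z^2/2 + z^3/3 - z^4/4))
        (1/(1+y) - (1 - y + y^2 - y^3)) y := by
    intro y hy
    have h1 : HasDerivAt (fun z : ℝ => 1+z) 1 y := (hasDerivAt_id y).const_add 1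
    have h2 : HasDerivAt (fun z : ℝ => Real.log (1+z)) (1/(1+y)) y := h1.log (by linarith)
    have hp : HasDerivAt (fun z : ℝ => z - z^2/2 + z^3/3 - z^4/4)
        (1 - y + y^2 - y^3) y := by
      have := (((hasDerivAt_id y).sub ((hasDerivAt_pow 2 y).div_const 2)).add
        ((hasDerivAt_pow 3 y).div_const 3)).sub ((hasDerivAt_pow 4 y).div_const 4)
      refine this.congr_deriv ?_
      push_cast
      ring
    exact h2.sub hp
  have mono : MonotoneOn (fun z : ℝ => Real.log (1+z) - (z - z^2/2 + z^3/3 - z^4/4))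
      (Ici (0:ℝ)) := by
    apply monotoneOn_of_deriv_nonneg (convex_Ici 0)
    · exact fun y hy => ((hd y hy).continuousAt).continuousWithinAt
    · intro y hy
      rw [interior_Ici] at hy
      exact (hd y hy.le).differentiableAt.differentiableWithinAt
    · intro y hy
      rw [interior_Ici] at hy
      rw [(hd y hy.le).deriv]
      have h1y : (0:ℝ) < 1 + y := by linarith [(show (0:ℝ) < y from hy).le]
      have : 1/(1+y) - (1 - y + y^2 - y^3) = y^4/(1+y) := by field_simp; ring
      rw [this]
      positivity
  have := mono (self_mem_Ici) (by exact hx) hx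
  simp only [Real.log_one] at this
  norm_num at this
  linarith

private lemma aux_log_ub (x : ℝ) (hx : 0 ≤ x) :
    Real.log (1+x) ≤ x - x^2/2 + x^3/3 := by
  have hd : ∀ y : ℝ, 0 ≤ y →
      HasDerivAt (fun z : ℝ => (z - z^2/2 + z^3/3) - Real.log (1+z))
        ((1 - y + y^2) - 1/(1+y)) y := by
    intro y hy
    have h1 : HasDerivAt (fun z : ℝ => 1+z) 1 y := (hasDerivAt_id y).const_add 1
    have h2 : HasDerivAt (fun z : ℝ => Real.log (1+z)) (1/(1+y)) y := h1.log (by linarith)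
    have hp : HasDerivAt (fun z : ℝ => z - z^2/2 + z^3/3) (1 - y + y^2) y := by
      have := ((hasDerivAt_id y).sub ((hasDerivAt_pow 2 y).div_const 2)).add
        ((hasDerivAt_pow 3 y).div_const 3)
      refine this.congr_deriv ?_
      push_cast
      ring
    exact hp.sub h2
  have mono : MonotoneOn (fun z : ℝ => (z - z^2/2 + z^3/3) - Real.log (1+z))
      (Ici (0:ℝ)) := by
    apply monotoneOn_of_deriv_nonneg (convex_Ici 0)
    · exact fun y hy => ((hd y hy).continuousAt).continuousWithinAt
    · intro y hy
      rw [interior_Ici] at hy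
      exact (hd y hy.le).differentiableAt.differentiableWithinAt
    · intro y hy
      rw [interior_Ici] at hy
      rw [(hd y hy.le).deriv]
      have h1y : (0:ℝ) < 1 + y := by linarith [(show (0:ℝ) < y from hy).le]
      have : (1 - y + y^2) - 1/(1+y) = y^3/(1+y) := by field_simp; ring
      rw [this]
      exact div_nonneg (pow_nonneg hy.le 3) h1y.le
  have := mono (self_mem_Ici) (by exact hx) hx
  simp only [Real.log_one] at this
  norm_num at this
  linarith

private lemma aux_log_lb2 (x : ℝ) (hx : 1/2 ≤ x) (hx1 : x ≤ 1) :
    (x^2-1)/(2*x) ≤ Real.log x := by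
  have hd : ∀ y : ℝ, y ∈ Icc (1/2 : ℝ) 1 →
      HasDerivAt (fun z : ℝ => Real.log z - (z^2-1)/(2*z))
        (1/y - ((2*y)*(2*y) - (y^2-1)*2)/(2*y)^2) y := by
    intro y hy
    have hy0 : (0:ℝ) < y := by linarith [hy.1]
    have h2 : HasDerivAt (fun z : ℝ => Real.log z) (1/y) y := by
      simpa using (hasDerivAt_id y).log hy0.ne'
    have hnum : HasDerivAt (fun z : ℝ => z^2 - 1) (2*y) y := by
      simpa using (hasDerivAt_pow 2 y).sub_const 1
    have hden : HasDerivAt (fun z : ℝ => 2*z) 2 y := by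
      simpa using (hasDerivAt_id y).const_mul 2
    have hq := hnum.div hden (by positivity)
    exact h2.sub hq
  have anti : AntitoneOn (fun z : ℝ => Real.log z - (z^2-1)/(2*z)) (Icc (1/2:ℝ) 1) := by
    apply antitoneOn_of_deriv_nonpos (convex_Icc _ _)
    · exact fun y hy => ((hd y hy).continuousAt).continuousWithinAt
    · intro y hy
      rw [interior_Icc] at hy
      exact (hd y (Ioo_subset_Icc_self hy)).differentiableAt.differentiableWithinAt
    · intro y hy
      rw [interior_Icc] at hy
      rw [(hd y (Ioo_subset_Icc_self hy)).deriv]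
      have hy0 : (0:ℝ) < y := by linarith [hy.1]
      have : 1/y - ((2*y)*(2*y) - (y^2-1)*2)/(2*y)^2 = -((y-1)^2/(2*y^2)) := by
        field_simp; ring
      rw [this]
      have : (0:ℝ) ≤ (y-1)^2/(2*y^2) := by positivity
      linarith
  have := anti (mem_Icc.2 ⟨hx, hx1⟩) (mem_Icc.2 ⟨by norm_num, le_refl 1⟩) hx1
  simp only [Real.log_one] at this
  norm_num at this
  linarith

private lemma aux_log_ub2 (x : ℝ) (hx : 1/2 ≤ x) (hx1 : x ≤ 1) :
    Real.log x ≤ 2*(x-1)/(x+1) := by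
  have hd : ∀ y : ℝ, y ∈ Icc (1/2 : ℝ) 1 →
      HasDerivAt (fun z : ℝ => 2*(z-1)/(z+1) - Real.log z)
        ((2*(y+1) - 2*(y-1)*1)/(y+1)^2 - 1/y) y := by
    intro y hy
    have hy0 : (0:ℝ) < y := by linarith [hy.1]
    have h2 : HasDerivAt (fun z : ℝ => Real.log z) (1/y) y := by
      simpa using (hasDerivAt_id y).log hy0.ne'
    have hnum : HasDerivAt (fun z : ℝ => 2*(z-1)) 2 y := by
      simpa using ((hasDerivAt_id y).sub_const 1).const_mul 2
    have hden : HasDerivAt (fun z : ℝ => z+1) 1 y := (hasDerivAt_id y).add_const 1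
    have hq := hnum.div hden (by positivity)
    exact hq.sub h2
  have anti : AntitoneOn (fun z : ℝ => 2*(z-1)/(z+1) - Real.log z) (Icc (1/2:ℝ) 1) := by
    apply antitoneOn_of_deriv_nonpos (convex_Icc _ _)
    · exact fun y hy => ((hd y hy).continuousAt).continuousWithinAt
    · intro y hy
      rw [interior_Icc] at hy
      exact (hd y (Ioo_subset_Icc_self hy)).differentiableAt.differentiableWithinAt
    · intro y hy
      rw [interior_Icc] at hy
      rw [(hd y (Ioo_subset_Icc_self hy)).deriv]
      have hy0 : (0:ℝ) < y := by linarith [hy.1]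
      have : (2*(y+1) - 2*(y-1)*1)/(y+1)^2 - 1/y = -((y-1)^2/(y*(y+1)^2)) := by
        field_simp; ring
      rw [this]
      have : (0:ℝ) ≤ (y-1)^2/(y*(y+1)^2) := by positivity
      linarith
  have := anti (mem_Icc.2 ⟨hx, hx1⟩) (mem_Icc.2 ⟨by norm_num, le_refl 1⟩) hx1
  simp only [Real.log_one] at this
  norm_num at this
  linarith

-- region-1: monotonicity in s (T(s) ≤ T(u))
private lemma polyA (u s m : ℝ) (hu0 : 0 ≤ u) (hu : u ≤ 2/3) (hs0 : 0 ≤ s) (hs : s ≤ u)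
    (hm : 0.34 ≤ m) :
    u*s - (u*s)^2/2 + (u*s)^3/3 + u*(1-s)/(1+u) + m*s
      ≤ u*u - (u*u)^2/2 + (u*u)^3/3 + u*(1-u)/(1+u) + m*u := by
  have h1u : (0:ℝ) < 1 + u := by linarith
  have key : (u*u - (u*u)^2/2 + (u*u)^3/3 + u*(1-u)/(1+u) + m*u)
      - (u*s - (u*s)^2/2 + (u*s)^3/3 + u*(1-s)/(1+u) + m*s)
      = (u - s) * (u^2/(1+u) + m - (u^2/2)*(u+s) + (u^3/3)*(u^2+u*s+s^2)) := by
    field_simp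
    ring
  have hbr : 0 ≤ u^2/(1+u) + m - (u^2/2)*(u+s) + (u^3/3)*(u^2+u*s+s^2) := by
    have h1 : (0:ℝ) ≤ u^2/(1+u) := by positivity
    have h2 : (0:ℝ) ≤ (u^3/3)*(u^2+u*s+s^2) := by positivity
    have h3 : (u^2/2)*(u+s) ≤ 8/27 := by nlinarith
    linarith
  nlinarith [mul_nonneg (sub_nonneg.2 hs) hbr]

-- region-1: coefficient of (q-2)
private lemma polyB (u c : ℝ) (hu0 : 0 ≤ u) (hu : u ≤ 2/3) (hc : c ≤ 0.6932) :
    0 ≤ 1 - u/2 + u^2/3 - u^3/4 - c := by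
  nlinarith [sq_nonneg (u - 2/3), sq_nonneg u, mul_nonneg hu0 hu0,
    mul_nonneg (mul_nonneg hu0 hu0) hu0]

-- region-1: base case q = 2
private lemma polyC (u c : ℝ) (hu0 : 0 ≤ u) (hu : u ≤ 2/3) (hc : c ≤ 0.6932) :
    0 ≤ 2*(u - u^2/2 + u^3/3 - u^4/4) - (u*u - (u*u)^2/2 + (u*u)^3/3)
        - u*(1-u)/(1+u) - c*u := by
  have h1u : (0:ℝ) < 1 + u := by linarith
  have key : 2*(u - u^2/2 + u^3/3 - u^4/4) - (u*u - (u*u)^2/2 + (u*u)^3/3)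
        - u*(1-u)/(1+u) - c*u
      = u * ((2 - 2*u + 2*u^2/3 - u^5/3 - c) - (1-u)/(1+u)) := by
    field_simp
    ring
  rw [key]
  apply mul_nonneg hu0
  rw [sub_nonneg, div_le_iff₀ h1u]
  nlinarith [pow_nonneg hu0 5, sq_nonneg u, mul_nonneg (mul_nonneg hu0 hu0) hu0,
    pow_nonneg hu0 6]
  
-- region-2 main polynomial inequality
private lemma polyE (u s c : ℝ) (hu : 2/3 ≤ u) (hu1 : u ≤ 1) (hs0 : 0 ≤ s) (hs : s ≤ u)
    (hc : 0.6931 ≤ c) (hc2 : c ≤ 0.6932) :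
    0 ≤ c*(2-u-s)*(1+u)*(u*s+3) + (u-1)*(u+3)*(u*s+3) - 4*(u*s-1)*(1+u)
        - 2*u*(1-s)*(u*s+3) := by
  have ha : (0:ℝ) ≤ 1 - u := by linarith
  have ha3 : 1 - u ≤ 1/3 := by linarith
  have hb : (0:ℝ) ≤ u - s := by linarith
  have hder : 0 ≤ (c - 6931/10000) * ((2-u-s)*(1+u)*(u*s+3)) := by
    apply mul_nonneg (by linarith)
    have h1 : (0:ℝ) ≤ 2-u-s := by linarith
    have h2 : (0:ℝ) ≤ 1+u := by linarith
    have h3 : (0:ℝ) ≤ u*s+3 := by nlinarith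
    positivity
  have g1 : 0 ≤ (1-u) * (1931/625 - 1931/625*(1-u) - 3069/1250*(1-u)^2
      + 8069/5000*(1-u)^3) := by
    apply mul_nonneg ha
    nlinarith [mul_nonneg ha ha, mul_nonneg (mul_nonneg ha ha) ha]
  have g2 : 0 ≤ (u-s) * (6931/1250 - 5793/2500*(1-u) - 4069/1000*(1-u)^2
      + 29207/10000*(1-u)^3) := by
    apply mul_nonneg hb
    nlinarith [mul_nonneg ha ha, mul_nonneg (mul_nonneg ha ha) ha]
  have g3 : 0 ≤ (u-s)^2 * (3069/5000 - 19207/10000*(1-u) + 13069/10000*(1-u)^2) := by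
    apply mul_nonneg (sq_nonneg _)
    nlinarith [sq_nonneg (1-u-1/3)]
  nlinarith [hder, g1, g2, g3]

set_option maxHeartbeats 2000000 in
private lemma Flem (u q : ℝ) (hu0 : 0 < u) (hu1 : u ≤ 1) (hq : 2 ≤ q) :
    u*(1 - u^(q-1))/(1+u) + Real.log 2 * (u*(q-2+1/q) + u^(q-1)*(1-1/q))
      ≤ q * Real.log (1+u) - Real.log (1+u^q) := by
  have hq0 : (0:ℝ) < q := by linarith
  have hc1 : (0.6931 : ℝ) ≤ Real.log 2 :=
    le_of_lt (lt_trans (by norm_num) Real.log_two_gt_d9)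
  have hc2 : Real.log 2 ≤ 0.6932 := le_of_lt (lt_trans Real.log_two_lt_d9 (by norm_num))
  have hs0 : 0 < u^(q-1) := Real.rpow_pos_of_pos hu0 _
  have hsu : u^(q-1) ≤ u := by
    have h := Real.rpow_le_rpow_of_exponent_ge hu0 hu1 (show (1:ℝ) ≤ q-1 by linarith)
    rwa [Real.rpow_one] at h
  have huq : u^q = u * u^(q-1) := by
    nth_rewrite 1 [show q = 1 + (q-1) by ring]
    rw [Real.rpow_add hu0, Real.rpow_one]
  set c := Real.log 2 with hcdef
  set s := u^(q-1) with hsdef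
  clear_value c s
  rw [huq]
  have hus0 : (0:ℝ) ≤ u * s := by positivity
  have hus1 : u * s ≤ 1 := by nlinarith
  have h1u : (0:ℝ) < 1 + u := by linarith
  rcases le_or_gt u (2/3) with hcase | hcase
  · -- region 1 : u ≤ 2/3
    have l3 := aux_log_lb u hu0.le
    have l4 := aux_log_ub (u*s) hus0
    have hql3 : q*(u - u^2/2 + u^3/3 - u^4/4) ≤ q*Real.log (1+u) :=
      mul_le_mul_of_nonneg_left l3 hq0.le
    have hinvq : (1:ℝ)/q ≤ 1/2 := by
      rw [div_le_div_iff₀ hq0 (by norm_num)]; linarith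
    have hinvq0 : (0:ℝ) < 1/q := by positivity
    have hm : (0.34:ℝ) ≤ c*(1-1/q) := by nlinarith
    have hA := polyA u s (c*(1-1/q)) hu0.le hcase hs0.le hsu hm
    have hB := polyB u c hu0.le hcase hc2
    have hC := polyC u c hu0.le hcase hc2
    have hq2 : 0 ≤ (q-2) * (u*(1 - u/2 + u^2/3 - u^3/4 - c)) :=
      mul_nonneg (by linarith) (mul_nonneg hu0.le hB)
    have key : u*(1-s)/(1+u) + c * (u*(q-2+1/q) + s*(1-1/q))
        ≤ q*(u - u^2/2 + u^3/3 - u^4/4) - (u*s - (u*s)^2/2 + (u*s)^3/3) := by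
      have hid : q*(u - u^2/2 + u^3/3 - u^4/4) - (u*s - (u*s)^2/2 + (u*s)^3/3)
          - (u*(1-s)/(1+u) + c * (u*(q-2+1/q) + s*(1-1/q)))
          = ((u*u - (u*u)^2/2 + (u*u)^3/3 + u*(1-u)/(1+u) + (c*(1-1/q))*u)
              - (u*s - (u*s)^2/2 + (u*s)^3/3 + u*(1-s)/(1+u) + (c*(1-1/q))*s))
            + (2*(u - u^2/2 + u^3/3 - u^4/4) - (u*u - (u*u)^2/2 + (u*u)^3/3)
              - u*(1-u)/(1+u) - c*u)
            + (q-2) * (u*(1 - u/2 + u^2/3 - u^3/4 - c)) := by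
        field_simp
        ring
      linarith [hA, hC, hq2, hid.ge, hid.le]
    linarith
  · -- region 2 : 2/3 < u
    have hu23 : (2:ℝ)/3 ≤ u := le_of_lt hcase
    have hx1 : (1:ℝ)/2 ≤ (1+u)/2 := by linarith
    have hx2 : (1+u)/2 ≤ 1 := by linarith
    have l1 := aux_log_lb2 ((1+u)/2) hx1 hx2
    have hy1 : (1:ℝ)/2 ≤ (1+u*s)/2 := by linarith
    have hy2 : (1+u*s)/2 ≤ 1 := by linarith
    have l2 := aux_log_ub2 ((1+u*s)/2) hy1 hy2
    have e1 : Real.log ((1+u)/2) = Real.log (1+u) - c := by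
      rw [hcdef]; exact Real.log_div (ne_of_gt (by linarith)) (by norm_num)
    have e2 : Real.log ((1+u*s)/2) = Real.log (1+u*s) - c := by
      rw [hcdef]; exact Real.log_div (ne_of_gt (by linarith)) (by norm_num)
    rw [e1] at l1
    rw [e2] at l2
    have r1 : (((1+u)/2)^2-1)/(2*((1+u)/2)) = ((1+u)^2-4)/(4*(1+u)) := by
      rw [div_eq_div_iff (by positivity) (by positivity)]
      ring
    have r2 : 2*((1+u*s)/2-1)/((1+u*s)/2+1) = 2*(u*s-1)/(u*s+3) := by
      rw [div_eq_div_iff (by positivity) (by positivity)]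
      ring
    rw [r1] at l1
    rw [r2] at l2
    -- l1 : ((1+u)^2-4)/(4*(1+u)) ≤ Real.log (1+u) - c
    -- l2 : Real.log (1+u*s) - c ≤ 2*(u*s-1)/(u*s+3)
    have hql1 : q * (c + ((1+u)^2-4)/(4*(1+u))) ≤ q * Real.log (1+u) :=
      mul_le_mul_of_nonneg_left (by linarith) hq0.le
    have hus3 : (0:ℝ) < u*s+3 := by linarith
    -- main algebraic step
    set α : ℝ := c*(1-u) + ((1+u)^2-4)/(4*(1+u)) with hαdef
    set β : ℝ := -c + 2*u*c - s*c - 2*(u*s-1)/(u*s+3) - u*(1-s)/(1+u) with hβdef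
    set γ : ℝ := (u-s)*c with hγdef
    clear_value α β γ
    have hα : 0 ≤ α := by
      have hid : α = ((1-u)*(4*c*(1+u) - (u+3)))/(4*(1+u)) := by
        rw [hαdef]; field_simp; ring
      rw [hid]
      apply div_nonneg _ (by linarith)
      apply mul_nonneg (by linarith)
      nlinarith
    have hγ : 0 ≤ γ := by
      rw [hγdef]; exact mul_nonneg (by linarith) (by linarith)
    have hE : 0 ≤ 2*α + β - γ*(1/2) := by
      have hP := polyE u s c hu23 hu1 hs0.le hsu hc1 hc2
      have hid : 2*α + β - γ*(1/2)
          = (c*(2-u-s)*(1+u)*(u*s+3) + (u-1)*(u+3)*(u*s+3) - 4*(u*s-1)*(1+u)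
              - 2*u*(1-s)*(u*s+3)) / (2*(1+u)*(u*s+3)) := by
        rw [hαdef, hβdef, hγdef]; field_simp; ring
      rw [hid]
      exact div_nonneg hP (by positivity)
    have hmono1 : 2*α ≤ q*α := by
      nlinarith [mul_nonneg hα (show (0:ℝ) ≤ q-2 by linarith)]
    have hmono2 : γ*(1/q) ≤ γ*(1/2) := by
      apply mul_le_mul_of_nonneg_left _ hγ
      rw [div_le_div_iff₀ hq0 (by norm_num)]; linarith
    have hidQ : q*(c + ((1+u)^2-4)/(4*(1+u))) - (c + 2*(u*s-1)/(u*s+3))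
        - (u*(1-s)/(1+u) + c * (u*(q-2+1/q) + s*(1-1/q)))
        = q*α + β - γ*(1/q) := by
      rw [hαdef, hβdef, hγdef]; field_simp; ring
    have key : u*(1-s)/(1+u) + c * (u*(q-2+1/q) + s*(1-1/q))
        ≤ q*(c + ((1+u)^2-4)/(4*(1+u))) - (c + 2*(u*s-1)/(u*s+3)) := by
      nlinarith [hidQ, hE, hmono1, hmono2]
    linarith

private lemma Kderiv (q : ℝ) {t : ℝ} (ht : 0 < t) :
    HasDerivAt (fun x : ℝ => (x^q+1)*(q*Real.log (x+1) - Real.log (x^q+1))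
        - (q-1)*Real.log 2*(x^(q-1)+x))
      (q*t^(q-1)*(q*Real.log (t+1) - Real.log (t^q+1))
        + (t^q+1)*(q*(1/(t+1)) - q*t^(q-1)/(t^q+1))
        - (q-1)*Real.log 2*((q-1)*t^(q-2)+1)) t := by
  have h1 : HasDerivAt (fun x : ℝ => x^q) (q*t^(q-1)) t :=
    Real.hasDerivAt_rpow_const (Or.inl ht.ne')
  have h1' : HasDerivAt (fun x : ℝ => x^q+1) (q*t^(q-1)) t := h1.add_const 1
  have hpos : (0:ℝ) < t^q+1 := by positivity
  have h2 : HasDerivAt (fun x : ℝ => Real.log (x+1)) (1/(t+1)) t := by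
    have := ((hasDerivAt_id t).add_const 1).log (by intro h; simp at h; linarith)
    simpa using this
  have h3 : HasDerivAt (fun x : ℝ => Real.log (x^q+1)) ((q*t^(q-1))/(t^q+1)) t :=
    h1'.log hpos.ne'
  have h4 : HasDerivAt (fun x : ℝ => q*Real.log (x+1) - Real.log (x^q+1))
      (q*(1/(t+1)) - (q*t^(q-1))/(t^q+1)) t := (h2.const_mul q).sub h3
  have h5 := h1'.mul h4
  have h6 : HasDerivAt (fun x : ℝ => x^(q-1)) ((q-1)*t^(q-2)) t := by
    have h := Real.hasDerivAt_rpow_const (x := t) (p := q-1) (Or.inl ht.ne')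
    rwa [show q-1-1 = q-2 by ring] at h
  have h7 : HasDerivAt (fun x : ℝ => x^(q-1)+x) ((q-1)*t^(q-2)+1) t :=
    h6.add (hasDerivAt_id t)
  have h8 := h7.const_mul ((q-1)*Real.log 2)
  have h9 := h5.sub h8
  exact h9

set_option maxHeartbeats 1000000 in
private lemma Kprime_nonneg (q : ℝ) (hq : 2 ≤ q) {t : ℝ} (ht : 1 ≤ t) :
    0 ≤ q*t^(q-1)*(q*Real.log (t+1) - Real.log (t^q+1))
        + (t^q+1)*(q*(1/(t+1)) - q*t^(q-1)/(t^q+1))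
        - (q-1)*Real.log 2*((q-1)*t^(q-2)+1) := by
  have ht0 : (0:ℝ) < t := lt_of_lt_of_le one_pos ht
  have hq0 : (0:ℝ) < q := by linarith
  have hu0 : (0:ℝ) < t⁻¹ := inv_pos.2 ht0
  have hu1 : t⁻¹ ≤ 1 := by
    have h := inv_mul_cancel₀ ht0.ne'
    nlinarith
  have htq : (0:ℝ) < t^q := Real.rpow_pos_of_pos ht0 q
  have F := Flem t⁻¹ q hu0 hu1 hq
  rw [Real.inv_rpow ht0.le, Real.inv_rpow ht0.le] at F
  have e1 : (1:ℝ) + t⁻¹ = (t+1)/t := by field_simp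
  have e2 : (1:ℝ) + (t^q)⁻¹ = (t^q+1)/t^q := by field_simp
  rw [e1, e2, Real.log_div (by positivity) ht0.ne',
    Real.log_div (by positivity) htq.ne', Real.log_rpow ht0] at F
  set X := t^(q-1) with hX
  have hX0 : 0 < X := Real.rpow_pos_of_pos ht0 _
  have hXq : t^q = X*t := by
    rw [hX]
    nth_rewrite 1 [show q = (q-1)+1 by ring]
    rw [Real.rpow_add ht0, Real.rpow_one]
  have hXq2 : t^(q-2) = X/t := by
    rw [hX, show q-2 = (q-1)-1 by ring, Real.rpow_sub ht0, Real.rpow_one]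
  clear_value X
  rw [hXq] at F
  rw [hXq, hXq2]
  set c := Real.log 2 with hc
  clear_value c
  -- F : t⁻¹*(1-X⁻¹)/((t+1)/t) + c*(t⁻¹*(q-2+1/q) + X⁻¹*(1-1/q))
  --       ≤ q*(Real.log (t+1) - Real.log t) - (Real.log (X*t+1) - q*Real.log t)
  have hmul := mul_le_mul_of_nonneg_left F (show (0:ℝ) ≤ q*X by positivity)
  have idA : q*X*(t⁻¹*(1-X⁻¹)/((t+1)/t) + c*(t⁻¹*(q-2+1/q) + X⁻¹*(1-1/q)))
      = q*(X-1)/(t+1) + (q-1)*c*((q-1)*(X/t)+1) := by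
    field_simp
    ring
  have idB : q*X*(q*(Real.log (t+1) - Real.log t) - (Real.log (X*t+1) - q*Real.log t))
      = q*X*(q*Real.log (t+1) - Real.log (X*t+1)) := by ring
  have idC : (X*t+1)*(q*(1/(t+1)) - q*X/(X*t+1)) = q*(1-X)/(t+1) := by
    have hXt1 : (0:ℝ) < X*t+1 := by positivity
    field_simp
    ring
  rw [idA, idB] at hmul
  rw [idC]
  have hneg : q*(1-X)/(t+1) = -(q*(X-1)/(t+1)) := by ring
  linarith [hmul, hneg.le, hneg.ge]

private lemma Kmain (q : ℝ) (hq : 2 ≤ q) {t : ℝ} (ht : 1 ≤ t) :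
    0 ≤ (t^q+1)*(q*Real.log (t+1) - Real.log (t^q+1)) - (q-1)*Real.log 2*(t^(q-1)+t) := by
  have mono : MonotoneOn (fun x : ℝ => (x^q+1)*(q*Real.log (x+1) - Real.log (x^q+1))
      - (q-1)*Real.log 2*(x^(q-1)+x)) (Set.Ici 1) := by
    apply monotoneOn_of_deriv_nonneg (convex_Ici 1)
    · intro x hx
      exact (Kderiv q (lt_of_lt_of_le one_pos hx)).continuousAt.continuousWithinAt
    · intro x hx
      rw [interior_Ici] at hx
      exact (Kderiv q (lt_trans one_pos hx)).differentiableAt.differentiableWithinAt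
    · intro x hx
      rw [interior_Ici] at hx
      rw [(Kderiv q (lt_trans one_pos hx)).deriv]
      exact Kprime_nonneg q hq (le_of_lt hx)
  have h1 := mono Set.self_mem_Ici (show t ∈ Set.Ici 1 from ht) ht
  simp only at h1
  have h0 : ((1:ℝ)^q+1)*(q*Real.log (1+1) - Real.log ((1:ℝ)^q+1))
      - (q-1)*Real.log 2*((1:ℝ)^(q-1)+1) = 0 := by
    rw [Real.one_rpow, Real.one_rpow, show (1:ℝ)+1 = 2 by norm_num]
    ring
  rw [h0] at h1
  exact h1

theorem two_point_log_ineq (t q : ℝ) (ht : 1 ≤ t) (hq : 2 ≤ q) :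
    Real.logb 2 (((t + 1) ^ q / (t ^ q + 1)) ^ (1 / (q - 1))) ≥
      (t ^ (q - 1) + t) / (t ^ q + 1) := by
  have ht0 : (0:ℝ) < t := by linarith
  have ht1 : (0:ℝ) < t + 1 := by linarith
  have hq1 : (0:ℝ) < q - 1 := by linarith
  have htq : (0:ℝ) < t^q := Real.rpow_pos_of_pos ht0 q
  have htq1 : (0:ℝ) < t^q + 1 := by linarith
  have ht1q : (0:ℝ) < (t+1)^q := Real.rpow_pos_of_pos ht1 q
  have hX0 : (0:ℝ) < (t+1)^q / (t^q+1) := by positivity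
  have hc0 : (0:ℝ) < Real.log 2 := Real.log_pos (by norm_num)
  rw [ge_iff_le, ← Real.log_div_log, Real.log_rpow hX0,
    Real.log_div ht1q.ne' htq1.ne', Real.log_rpow ht1]
  have hK := Kmain q hq ht
  have hrw : 1/(q-1) * (q*Real.log (t+1) - Real.log (t^q+1)) / Real.log 2
      = (q*Real.log (t+1) - Real.log (t^q+1)) / ((q-1)*Real.log 2) := by
    field_simp
  rw [hrw, div_le_div_iff₀ htq1 (by positivity)]
  nlinarith [hK]
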